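/- Under the same hypotheses, (1+λ)∫_ℝ w(ε)Γ0(ε)φ(ε)² dε = (1/2)∫∫ w(ε)K̄0(ε,u)(φ(u)+φ(ε))² dε du. Consequently, if λ = -1 then φ = 0 almost everywhere with respect to the measure w·Γ0·dε; i.e., -1 is not an eigenvalue of the operator K0 = K̄0/Γ0. -/

import Mathlib

open MeasureTheory Real

noncomputable def f0 (x : ℝ) : ℝ := 1 / (Real.exp x + 1)
noncomputable def n0 (y : ℝ) : ℝ := 1 / (Real.exp y - 1)
noncomputable def w (x : ℝ) : ℝ := f0 x * (1 - f0 x)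
noncomputable def k0 (x y : ℝ) : ℝ := (n0 y + f0 (y + x)) * y ^ 2 * Real.sign y
noncomputable def K0bar (e u : ℝ) : ℝ := (n0 (u - e) + f0 u) * (u - e) ^ 2 * Real.sign (u - e)
noncomputable def Gamma0 (e : ℝ) : ℝ := ∫ u, K0bar e u
noncomputable def gamma0 (x : ℝ) : ℝ := ∫ y, k0 x y

lemma exp_add_one_pos (x : ℝ) : 0 < Real.exp x + 1 := by positivity

lemma f0_pos (x : ℝ) : 0 < f0 x := by
  unfold f0; positivity

lemma f0_lt_one (x : ℝ) : f0 x < 1 := by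
  unfold f0
  rw [div_lt_one (exp_add_one_pos x)]
  linarith [Real.exp_pos x]

lemma w_pos (x : ℝ) : 0 < w x := by
  unfold w
  have := f0_pos x; have := f0_lt_one x
  nlinarith

lemma K0bar_pos {e u : ℝ} (h : u ≠ e) : 0 < K0bar e u := by
  unfold K0bar
  rcases lt_or_gt_of_ne h with hlt | hgt
  · -- u < e
    have hy : u - e < 0 := by linarith
    have h1 : Real.exp (u - e) - 1 < 0 := by
      have := Real.exp_lt_one_iff.mpr hy; linarith
    have h2 : (-1 : ℝ) < Real.exp (u - e) - 1 := by
      linarith [Real.exp_pos (u - e)]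
    have hn0 : n0 (u - e) < -1 := by
      unfold n0
      rw [div_lt_iff_of_neg h1]
      linarith
    have hsum : n0 (u - e) + f0 u < 0 := by linarith [f0_lt_one u]
    rw [Real.sign_of_neg hy]
    have hsq : 0 < (u - e) ^ 2 :=
      lt_of_le_of_ne (sq_nonneg _) (Ne.symm (pow_ne_zero 2 (sub_ne_zero.2 h)))
    nlinarith
  · -- e < u
    have hy : 0 < u - e := by linarith
    have h1 : 0 < Real.exp (u - e) - 1 := by
      have := Real.one_lt_exp_iff.mpr hy; linarith
    have hn0 : 0 < n0 (u - e) := by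
      unfold n0; positivity
    have hsum : 0 < n0 (u - e) + f0 u := by linarith [f0_pos u]
    rw [Real.sign_of_pos hy]
    have hsq : 0 < (u - e) ^ 2 := by positivity
    nlinarith

lemma K0bar_nonneg (e u : ℝ) : 0 ≤ K0bar e u := by
  rcases eq_or_ne u e with rfl | h
  · unfold K0bar; simp
  · exact (K0bar_pos h).le

lemma wK_symm (e u : ℝ) : w e * K0bar e u = w u * K0bar u e := by
  rcases eq_or_ne u e with rfl | h
  · rfl
  · unfold K0bar
    have hs : Real.sign (e - u) = -Real.sign (u - e) := by
      rw [show e - u = -(u - e) by ring, Real.sign_neg]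
    have hsq : (e - u) ^ 2 = (u - e) ^ 2 := by ring
    rw [hs, hsq]
    have key : w e * (n0 (u - e) + f0 u) = -(w u * (n0 (e - u) + f0 e)) := by
      unfold w f0 n0
      rw [Real.exp_sub, Real.exp_sub]
      have ha := Real.exp_pos e
      have hb := Real.exp_pos u
      have hab : Real.exp u ≠ Real.exp e := fun hh => h (Real.exp_injective hh)
      set a := Real.exp e
      set b := Real.exp u
      have ha1 : a + 1 ≠ 0 := by positivity
      have hb1 : b + 1 ≠ 0 := by positivity
      have hba : b - a ≠ 0 := sub_ne_zero.2 hab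
      have hab' : a - b ≠ 0 := sub_ne_zero.2 (Ne.symm hab)
      rw [div_sub_one ha.ne', div_sub_one hb.ne', one_div_div, one_div_div]
      field_simp
      ring
    linear_combination key * ((u - e) ^ 2 * Real.sign (u - e))

lemma Gamma0_pos {e : ℝ} (h : Integrable (fun u => K0bar e u)) : 0 < Gamma0 e := by
  rw [Gamma0, integral_pos_iff_support_of_nonneg (fun u => K0bar_nonneg e u) h]
  have hsub : Set.Ioi e ⊆ Function.support fun u => K0bar e u := by
    intro u hu
    exact (K0bar_pos (ne_of_gt hu)).ne'
  refine lt_of_lt_of_le ?_ (measure_mono hsub)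
  simp [Real.volume_Ioi]

lemma measurable_rsign : Measurable Real.sign := by
  have : Real.sign = fun r : ℝ => if r < 0 then (-1 : ℝ) else if 0 < r then 1 else 0 := rfl
  rw [this]
  exact Measurable.ite (measurableSet_lt measurable_id measurable_const) measurable_const
    (Measurable.ite (measurableSet_lt measurable_const measurable_id) measurable_const
      measurable_const)

lemma measurable_f0 : Measurable f0 :=
  measurable_const.div (Real.measurable_exp.add measurable_const)

lemma measurable_n0 : Measurable n0 :=
  measurable_const.div (Real.measurable_exp.sub measurable_const)

lemma measurable_w : Measurable w :=
  measurable_f0.mul (measurable_const.sub measurable_f0)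

lemma measurable_K0bar : Measurable (fun p : ℝ × ℝ => K0bar p.1 p.2) := by
  unfold K0bar
  have hsub : Measurable (fun p : ℝ × ℝ => p.2 - p.1) := measurable_snd.sub measurable_fst
  exact (((measurable_n0.comp hsub).add (measurable_f0.comp measurable_snd)).mul
    (hsub.pow_const 2)).mul (measurable_rsign.comp hsub)

theorem eigenvalue_identity_plus (φ : ℝ → ℝ) (lam : ℝ)
    (hmeas : Measurable φ)
    (hL2 : Integrable (fun e => w e * Gamma0 e * φ e ^ 2))
    (hker : ∀ e, Integrable (fun u => K0bar e u))
    (hker1 : Integrable (fun p : ℝ × ℝ =>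
      w p.1 * K0bar p.1 p.2 * (φ p.2 + φ p.1) ^ 2) (volume : Measure (ℝ × ℝ)))
    (hker2 : Integrable (fun p : ℝ × ℝ =>
      w p.1 * K0bar p.1 p.2 * φ p.1 * φ p.2) (volume : Measure (ℝ × ℝ)))
    (heig : ∀ e, lam * φ e = ∫ u, (K0bar e u / Gamma0 e) * φ u) :
    ((1 + lam) * ∫ e, w e * Gamma0 e * φ e ^ 2 =
      (1 / 2) * ∫ p : ℝ × ℝ, w p.1 * K0bar p.1 p.2 * (φ p.2 + φ p.1) ^ 2) ∧
    (lam = -1 →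
      ∀ᵐ e ∂((volume : Measure ℝ).withDensity fun e => ENNReal.ofReal (w e * Gamma0 e)),
        φ e = 0) := by
  have hΓpos : ∀ e, 0 < Gamma0 e := fun e => Gamma0_pos (hker e)
  -- eigenvalue relation in kernel form
  have heig' : ∀ e, ∫ u, K0bar e u * φ u = Gamma0 e * (lam * φ e) := by
    intro e
    have hrw : ∫ u, K0bar e u / Gamma0 e * φ u
        = (Gamma0 e)⁻¹ * ∫ u, K0bar e u * φ u := by
      rw [← integral_const_mul]
      congr 1; funext u; ring
    have h2 : (Gamma0 e)⁻¹ * ∫ u, K0bar e u * φ u = lam * φ e := by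
      rw [← hrw, ← heig e]
    rw [← h2, ← mul_assoc, mul_inv_cancel₀ (hΓpos e).ne', one_mul]
  set A : ℝ × ℝ → ℝ := fun p => w p.1 * K0bar p.1 p.2 * φ p.1 ^ 2 with hAdef
  set B : ℝ × ℝ → ℝ := fun p => w p.1 * K0bar p.1 p.2 * φ p.2 ^ 2 with hBdef
  set C : ℝ × ℝ → ℝ := fun p => w p.1 * K0bar p.1 p.2 * φ p.1 * φ p.2 with hCdef
  have hwK_nonneg : ∀ p : ℝ × ℝ, 0 ≤ w p.1 * K0bar p.1 p.2 :=
    fun p => mul_nonneg (w_pos p.1).le (K0bar_nonneg p.1 p.2)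
  have hG : Integrable (fun p : ℝ × ℝ =>
      w p.1 * K0bar p.1 p.2 * (φ p.2 + φ p.1) ^ 2 - 2 * C p) := by
    exact hker1.sub (hker2.const_mul 2)
  have hA : Integrable A := by
    refine Integrable.mono' hG ?_ (ae_of_all _ fun p => ?_)
    · exact ((((measurable_w.comp measurable_fst).mul measurable_K0bar).mul
        ((hmeas.comp measurable_fst).pow_const 2))).aestronglyMeasurable
    · have h1 := hwK_nonneg p
      have h2 := sq_nonneg (φ p.2)
      have h3 := sq_nonneg (φ p.1)
      rw [Real.norm_eq_abs, abs_of_nonneg (mul_nonneg h1 h3)]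
      simp only [hAdef, hCdef]
      nlinarith [mul_nonneg h1 h2]
  have hB : Integrable B := by
    refine Integrable.mono' hG ?_ (ae_of_all _ fun p => ?_)
    · exact ((((measurable_w.comp measurable_fst).mul measurable_K0bar).mul
        ((hmeas.comp measurable_snd).pow_const 2))).aestronglyMeasurable
    · have h1 := hwK_nonneg p
      have h2 := sq_nonneg (φ p.2)
      have h3 := sq_nonneg (φ p.1)
      rw [Real.norm_eq_abs, abs_of_nonneg (mul_nonneg h1 h2)]
      simp only [hBdef, hCdef]
      nlinarith [mul_nonneg h1 h3]
  set I : ℝ := ∫ e, w e * Gamma0 e * φ e ^ 2 with hIdef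
  have hIA : ∫ p, A p = I := by
    rw [Measure.volume_eq_prod] at hA ⊢
    rw [integral_prod _ hA]
    have hinner : ∀ e : ℝ, ∫ u, A (e, u) = w e * Gamma0 e * φ e ^ 2 := by
      intro e
      have : ∫ u, A (e, u) = (w e * φ e ^ 2) * ∫ u, K0bar e u := by
        rw [← integral_const_mul]
        congr 1; funext u; simp only [hAdef]; ring
      rw [this, ← Gamma0]; ring
    simp_rw [hinner]
    exact hIdef.symm
  have hIB : ∫ p, B p = I := by
    have hswap : ∀ p : ℝ × ℝ, B p = A p.swap := by
      intro p
      simp only [hAdef, hBdef, Prod.fst_swap, Prod.snd_swap]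
      linear_combination (wK_symm p.1 p.2) * φ p.2 ^ 2
    calc ∫ p, B p = ∫ p : ℝ × ℝ, A p.swap := by simp_rw [hswap]
      _ = ∫ p, A p := by
          exact Measure.measurePreserving_swap.integral_comp
            MeasurableEquiv.prodComm.measurableEmbedding A
      _ = I := hIA
  have hIC : ∫ p, C p = lam * I := by
    rw [Measure.volume_eq_prod] at hker2
    rw [Measure.volume_eq_prod, show C = fun p : ℝ × ℝ =>
      w p.1 * K0bar p.1 p.2 * φ p.1 * φ p.2 from rfl, integral_prod _ hker2]
    have hinner : ∀ e : ℝ, (∫ u, w e * K0bar e u * φ e * φ u)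
        = lam * (w e * Gamma0 e * φ e ^ 2) := by
      intro e
      have : (∫ u, w e * K0bar e u * φ e * φ u)
          = (w e * φ e) * ∫ u, K0bar e u * φ u := by
        rw [← integral_const_mul]
        congr 1; funext u; ring
      rw [this, heig' e]; ring
    show ∫ x, ∫ y, w x * K0bar x y * φ x * φ y ∂volume ∂volume = lam * I
    simp_rw [hinner]
    rw [integral_const_mul]
  have hsplit : ∫ p : ℝ × ℝ, w p.1 * K0bar p.1 p.2 * (φ p.2 + φ p.1) ^ 2
      = I + I + 2 * (lam * I) := by
    have hfun : (fun p : ℝ × ℝ => w p.1 * K0bar p.1 p.2 * (φ p.2 + φ p.1) ^ 2)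
        = fun p => (A p + B p) + 2 * C p := by
      funext p; simp only [hAdef, hBdef, hCdef]; ring
    rw [hfun,
      show (∫ p : ℝ × ℝ, (A p + B p) + 2 * C p) = (∫ p : ℝ × ℝ, A p + B p) + ∫ p : ℝ × ℝ, 2 * C p
        from integral_add (hA.add hB) (hker2.const_mul 2),
      show (∫ p : ℝ × ℝ, A p + B p) = (∫ p : ℝ × ℝ, A p) + ∫ p : ℝ × ℝ, B p
        from integral_add hA hB,
      integral_const_mul, hIA, hIB, hIC]
  constructor
  · rw [hsplit]; ring
  · intro hlam
    have hJ0 : ∫ p : ℝ × ℝ, w p.1 * K0bar p.1 p.2 * (φ p.2 + φ p.1) ^ 2 = 0 := by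
      rw [hsplit, hlam]; ring
    have hae0 : (fun p : ℝ × ℝ => w p.1 * K0bar p.1 p.2 * (φ p.2 + φ p.1) ^ 2)
        =ᵐ[volume] 0 := by
      rw [← integral_eq_zero_iff_of_nonneg
        (fun p => mul_nonneg (hwK_nonneg p) (sq_nonneg _)) hker1]
      exact hJ0
    have hdiag : ∀ᵐ p : ℝ × ℝ ∂volume, p.2 ≠ p.1 := by
      have hms : MeasurableSet {p : ℝ × ℝ | p.2 = p.1} :=
        measurableSet_eq_fun measurable_snd measurable_fst
      have hz : (volume : Measure (ℝ × ℝ)) {p : ℝ × ℝ | p.2 = p.1} = 0 := by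
        rw [Measure.volume_eq_prod, Measure.measure_prod_null hms]
        refine ae_of_all _ fun x => ?_
        simp only [Set.preimage_setOf_eq]
        have h1 : {u : ℝ | (x, u).2 = (x, u).1} = {x} := by ext u; simp
        rw [h1]
        exact measure_singleton x
      exact measure_eq_zero_iff_ae_notMem.mp hz
    have hsum : ∀ᵐ p : ℝ × ℝ ∂volume, φ p.2 + φ p.1 = 0 := by
      filter_upwards [hae0, hdiag] with p hp hne
      have hwKpos : 0 < w p.1 * K0bar p.1 p.2 :=
        mul_pos (w_pos p.1) (K0bar_pos hne)
      have : (φ p.2 + φ p.1) ^ 2 = 0 := by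
        rcases mul_eq_zero.mp hp with h | h
        · exact absurd h hwKpos.ne'
        · exact h
      nlinarith [sq_nonneg (φ p.2 + φ p.1)]
    haveI : (ae (volume : Measure ℝ)).NeBot := by
      rw [ae_neBot]
      intro h0
      have : (volume : Measure ℝ) (Set.Ioi (0:ℝ)) = 0 := by rw [h0]; rfl
      rw [Real.volume_Ioi] at this
      exact ENNReal.top_ne_zero this
    rw [Measure.volume_eq_prod] at hsum
    have h2 := Measure.ae_ae_of_ae_prod hsum
    obtain ⟨e0, he0⟩ := h2.exists
    obtain ⟨e1, he1, he1'⟩ := (h2.and he0).exists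
    obtain ⟨u0, hu0a, hu0b⟩ := (he0.and he1).exists
    have he00 : φ e0 = 0 := by linarith
    have hfinal : ∀ᵐ u ∂(volume : Measure ℝ), φ u = 0 := by
      filter_upwards [he0] with u hu
      linarith
    exact hfinal.filter_mono
      (Measure.AbsolutelyContinuous.ae_le (withDensity_absolutelyContinuous _ _))
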